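/- Let T ⊆ ℝ² be a triangle with vertices A, B, C and let z be an interior point of T. Then the polar triangle T^z is an acute triangle if and only if each of the three angles ∠AzB, ∠BzC, ∠CzA is greater than π/2; equivalently, if and only if z lies in the intersection of the three open disks having the sides of T as diameters. -/

import Mathlib

open scoped ENNReal RealInnerProductSpace Pointwise

noncomputable section

variable {E : Type*} [NormedAddCommGroup E] [InnerProductSpace ℝ E]

/-- The polar body of `K` with respect to the point `z`:
`K^z = {y : ∀ x ∈ K, ⟪x - z, y⟫ ≤ 1}`. -/
def polarBody (K : Set E) (z : E) : Set E :=
  {y | ∀ x ∈ K, ⟪x - z, y⟫ ≤ (1 : ℝ)}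

/-- `q : ZMod m → E` is a closed generalized billiard trajectory of `K`:
the `q i` are points of `∂K`, consecutive points are distinct, and at each point the
change of (unit) direction is `-lam • nv` for some `lam > 0` and outer unit normal `nv`
of a supporting hyperplane of `K` at that point. -/
def IsClosedBilliardTraj (K : Set E) {m : ℕ} [NeZero m] (q : ZMod m → E) : Prop :=
  2 ≤ m ∧ (∀ i, q i ∈ frontier K) ∧ (∀ i : ZMod m, q (i + 1) ≠ q i) ∧
    ∀ i : ZMod m, ∃ (lam : ℝ) (nv : E), 0 < lam ∧ ‖nv‖ = 1 ∧
      (∀ x ∈ K, ⟪x - q i, nv⟫ ≤ (0 : ℝ)) ∧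
      ‖q (i + 1) - q i‖⁻¹ • (q (i + 1) - q i)
        - ‖q i - q (i - 1)‖⁻¹ • (q i - q (i - 1)) = -(lam • nv)

/-- The length (perimeter) of a closed polygonal trajectory. -/
def billiardLength {m : ℕ} [NeZero m] (q : ZMod m → E) : ℝ :=
  ∑ i : ZMod m, ‖q (i + 1) - q i‖

/-- `α(K)`: the infimum of the lengths of the closed generalized billiard trajectories
inside `K`, equal to `∞` if there are none. -/
def alpha (K : Set E) : ℝ≥0∞ :=
  ⨅ (m : ℕ) (_ : NeZero m) (q : ZMod m → E) (_ : IsClosedBilliardTraj K q),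
    ENNReal.ofReal (billiardLength q)

/-- The billiard product `β(K) = inf_z α(K) · α(K^z)`. -/
def billiardProduct (K : Set E) : ℝ≥0∞ :=
  ⨅ z : E, alpha K * alpha (polarBody K z)

/-- `S` is an acute triangle: the convex hull of three affinely independent points all of
whose angles are less than `π/2`. -/
def IsAcuteTriangle (S : Set (EuclideanSpace ℝ (Fin 2))) : Prop :=
  ∃ A B C : EuclideanSpace ℝ (Fin 2), AffineIndependent ℝ ![A, B, C] ∧
    S = convexHull ℝ {A, B, C} ∧
    EuclideanGeometry.angle B A C < Real.pi / 2 ∧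
    EuclideanGeometry.angle A B C < Real.pi / 2 ∧
    EuclideanGeometry.angle A C B < Real.pi / 2

local notation "V2" => EuclideanSpace ℝ (Fin 2)

lemma aux_inner_div_neg {F : Type*} [NormedAddCommGroup F] [InnerProductSpace ℝ F] (x y : F) :
    ⟪x, y⟫ / (‖x‖ * ‖y‖) < 0 ↔ ⟪x, y⟫ < 0 := by
  rcases eq_or_lt_of_le (mul_nonneg (norm_nonneg x) (norm_nonneg y)) with h | h
  · rw [← h, div_zero]
    have : ⟪x, y⟫ = 0 := by
      rcases mul_eq_zero.1 h.symm with h0 | h0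
      · simp [norm_eq_zero.1 h0]
      · simp [norm_eq_zero.1 h0]
    simp [this]
  · rw [div_neg_iff]
    constructor
    · rintro (⟨h1, h2⟩ | ⟨h1, h2⟩) <;> [exact absurd h (not_lt.2 h2.le); exact h1]
    · intro h1; exact Or.inr ⟨h1, h⟩

lemma aux_pi_div_two_lt_angle_iff {F : Type*} [NormedAddCommGroup F] [InnerProductSpace ℝ F]
    (x y : F) : Real.pi / 2 < InnerProductGeometry.angle x y ↔ ⟪x, y⟫ < 0 := by
  rw [InnerProductGeometry.angle, Real.arccos, lt_sub_iff_add_lt,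
    add_lt_iff_neg_left, Real.arcsin_lt_zero, aux_inner_div_neg]

lemma aux_angle_lt_pi_div_two_iff {F : Type*} [NormedAddCommGroup F] [InnerProductSpace ℝ F]
    (x y : F) : InnerProductGeometry.angle x y < Real.pi / 2 ↔ 0 < ⟪x, y⟫ := by
  rw [InnerProductGeometry.angle, Real.arccos_lt_pi_div_two]
  rcases eq_or_lt_of_le (mul_nonneg (norm_nonneg x) (norm_nonneg y)) with h | h
  · rw [← h, div_zero]
    have : ⟪x, y⟫ = 0 := by
      rcases mul_eq_zero.1 h.symm with h0 | h0
      · simp [norm_eq_zero.1 h0]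
      · simp [norm_eq_zero.1 h0]
    simp [this]
  · rw [div_pos_iff]
    constructor
    · rintro (⟨h1, h2⟩ | ⟨h1, h2⟩) <;> [exact h1; exact absurd h (not_lt.2 h2.le)]
    · intro h1; exact Or.inl ⟨h1, h⟩

lemma aux_ball_iff {F : Type*} [NormedAddCommGroup F] [InnerProductSpace ℝ F] (A B z : F) :
    z ∈ Metric.ball (midpoint ℝ A B) (dist A B / 2) ↔ ⟪A - z, B - z⟫ < 0 := by
  have h1 : z - midpoint ℝ A B = (-(1/2) : ℝ) • ((A - z) + (B - z)) := by
    rw [midpoint_eq_smul_add, invOf_eq_inv, show ((2:ℝ)⁻¹) = 1/2 by norm_num]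
    module
  have h2 : A - B = (A - z) - (B - z) := by abel
  rw [Metric.mem_ball, dist_eq_norm, dist_eq_norm, h1, h2, norm_smul]
  have e1 := norm_add_sq_real (A - z) (B - z)
  have e2 := norm_sub_sq_real (A - z) (B - z)
  have n1 := norm_nonneg ((A - z) + (B - z))
  have n2 := norm_nonneg ((A - z) - (B - z))
  rw [Real.norm_eq_abs, abs_of_nonpos (by norm_num : (-(1/2):ℝ) ≤ 0)]
  constructor
  · intro h; nlinarith
  · intro h; nlinarith

lemma aux_inner2 (x y : V2) : ⟪x, y⟫ = x 0 * y 0 + x 1 * y 1 := by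
  simp [PiLp.inner_apply, Fin.sum_univ_two, RCLike.inner_apply, conj_trivial]
  ring

lemma aux_sub_apply (x y : V2) (i : Fin 2) : (x - y) i = x i - y i := rfl

lemma aux_angle_eq (p1 p2 p3 : V2) :
    EuclideanGeometry.angle p1 p2 p3 = InnerProductGeometry.angle (p1 - p2) (p3 - p2) := rfl

lemma aux_basis_extreme {ι : Type*} [Fintype ι] {F : Type*} [NormedAddCommGroup F]
    [NormedSpace ℝ F] (b : AffineBasis ι ℝ F) (i : ι) :
    b i ∈ (convexHull ℝ (Set.range b)).extremePoints ℝ := by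
  rw [mem_extremePoints]
  refine ⟨subset_convexHull ℝ _ ⟨i, rfl⟩, fun x₁ hx₁ x₂ hx₂ hseg => ?_⟩
  rw [b.convexHull_eq_nonneg_coord] at hx₁ hx₂
  rw [openSegment_eq_image] at hseg
  obtain ⟨t, ⟨ht0, ht1⟩, hteq⟩ := hseg
  have happ : ∀ j, b.coord j (b i) = (1 - t) * b.coord j x₁ + t * b.coord j x₂ := by
    intro j
    rw [← hteq]
    have := Convex.combo_affine_apply (f := b.coord j)
      (a := 1 - t) (b := t) (x := x₁) (y := x₂) (by ring)
    simpa [smul_eq_mul] using this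
  have hne : ∀ j, j ≠ i → b.coord j x₁ = 0 ∧ b.coord j x₂ = 0 := by
    intro j hj
    have h0 : b.coord j (b i) = 0 := b.coord_apply_ne hj
    have h1 := hx₁ j
    have h2 := hx₂ j
    have := happ j
    constructor <;> nlinarith
  have hext : ∀ x, (∀ j, j ≠ i → b.coord j x = 0) → x = b i := by
    intro x hx
    refine b.ext_elem fun j => ?_
    by_cases hj : j = i
    · subst hj
      have hsx := b.sum_coord_apply_eq_one x
      have hsb := b.sum_coord_apply_eq_one (b j)
      rw [Finset.sum_eq_single_of_mem j (Finset.mem_univ j)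
        (fun k _ hk => hx k hk)] at hsx
      rw [Finset.sum_eq_single_of_mem j (Finset.mem_univ j)
        (fun k _ hk => b.coord_apply_ne hk)] at hsb
      rw [hsx, hsb]
    · rw [hx j hj, b.coord_apply_ne hj]
  exact ⟨hext x₁ fun j hj => (hne j hj).1, hext x₂ fun j hj => (hne j hj).2⟩

lemma aux_vertex_mem {X Y Z : V2} (h : AffineIndependent ℝ ![X, Y, Z]) {s : Set V2}
    (hs : convexHull ℝ {X, Y, Z} = convexHull ℝ s) :
    X ∈ s ∧ Y ∈ s ∧ Z ∈ s := by
  have htop : affineSpan ℝ (Set.range ![X, Y, Z]) = ⊤ := by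
    rw [h.affineSpan_eq_top_iff_card_eq_finrank_add_one]
    simp [finrank_euclideanSpace_fin]
  let b : AffineBasis (Fin 3) ℝ V2 := ⟨![X, Y, Z], h, htop⟩
  have hrange : Set.range (b : Fin 3 → V2) = {X, Y, Z} := by
    show Set.range ![X, Y, Z] = _
    rw [Matrix.range_cons, Matrix.range_cons, Matrix.range_cons, Matrix.range_empty]
    ext x
    simp [or_comm, or_left_comm]
  have hmem : ∀ i : Fin 3, b i ∈ s := by
    intro i
    have := aux_basis_extreme b i
    rw [hrange, hs] at this
    exact extremePoints_convexHull_subset this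
  exact ⟨hmem 0, hmem 1, hmem 2⟩

/-- All three angles of the triangle `x y z` are acute (in the order used by
`IsAcuteTriangle`). -/
def Acu3 (x y z : V2) : Prop :=
  EuclideanGeometry.angle y x z < Real.pi / 2 ∧
  EuclideanGeometry.angle x y z < Real.pi / 2 ∧
  EuclideanGeometry.angle x z y < Real.pi / 2

lemma Acu3.s12 {x y z : V2} (h : Acu3 x y z) : Acu3 y x z := by
  obtain ⟨h1, h2, h3⟩ := h
  exact ⟨h2, h1, by rwa [EuclideanGeometry.angle_comm]⟩

lemma Acu3.s23 {x y z : V2} (h : Acu3 x y z) : Acu3 x z y := by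
  obtain ⟨h1, h2, h3⟩ := h
  exact ⟨by rwa [EuclideanGeometry.angle_comm], h3, h2⟩


set_option maxHeartbeats 2000000

/-- For a triangle `T` with vertices `A, B, C` and `z` interior to `T`,
the polar triangle `T^z` is acute iff all three angles `∠AzB, ∠BzC, ∠CzA` exceed `π/2`,
equivalently iff `z` lies in all three open disks having the sides of `T` as diameters. -/
theorem polar_triangle_acute_iff (A B C z : EuclideanSpace ℝ (Fin 2))
    (hABC : AffineIndependent ℝ ![A, B, C])
    (hz : z ∈ interior (convexHull ℝ {A, B, C})) :
    (IsAcuteTriangle (polarBody (convexHull ℝ {A, B, C}) z) ↔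
      (Real.pi / 2 < EuclideanGeometry.angle A z B ∧
       Real.pi / 2 < EuclideanGeometry.angle B z C ∧
       Real.pi / 2 < EuclideanGeometry.angle C z A)) ∧
    (IsAcuteTriangle (polarBody (convexHull ℝ {A, B, C}) z) ↔
      (z ∈ Metric.ball (midpoint ℝ A B) (dist A B / 2) ∧
       z ∈ Metric.ball (midpoint ℝ B C) (dist B C / 2) ∧
       z ∈ Metric.ball (midpoint ℝ C A) (dist C A / 2))) := by
  classical

  classical
  have htop : affineSpan ℝ (Set.range ![A, B, C]) = ⊤ := by
    rw [hABC.affineSpan_eq_top_iff_card_eq_finrank_add_one]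
    simp [finrank_euclideanSpace_fin]
  let b : AffineBasis (Fin 3) ℝ V2 := ⟨![A, B, C], hABC, htop⟩
  have hrange : Set.range (b : Fin 3 → V2) = {A, B, C} := by
    show Set.range ![A, B, C] = _
    rw [Matrix.range_cons, Matrix.range_cons, Matrix.range_cons, Matrix.range_empty]
    ext x; simp [or_comm, or_left_comm]
  obtain ⟨α, β, γ, hα, hβ, hγ, hsum, hcomb⟩ :
      ∃ α β γ : ℝ, 0 < α ∧ 0 < β ∧ 0 < γ ∧ α + β + γ = 1 ∧ α • A + β • B + γ • C = z := by
    rw [← hrange, b.interior_convexHull] at hz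
    refine ⟨b.coord 0 z, b.coord 1 z, b.coord 2 z, hz 0, hz 1, hz 2, ?_, ?_⟩
    · have := b.sum_coord_apply_eq_one z
      rwa [Fin.sum_univ_three] at this
    · have hsum1 : ∑ i, b.coord i z = 1 := b.sum_coord_apply_eq_one z
      have h1 := b.affineCombination_coord_eq_self z
      rw [Finset.affineCombination_eq_linear_combination _ _ _ hsum1,
        Fin.sum_univ_three] at h1
      exact h1
  clear hrange b htop
  have key : ∀ c1 c2 c3 : ℝ, c1 + c2 + c3 = 0 → c1 • A + c2 • B + c3 • C = 0 →
      c1 = 0 ∧ c2 = 0 ∧ c3 = 0 := by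
    intro c1 c2 c3 h0 hc
    have h := affineIndependent_iff.1 hABC Finset.univ ![c1, c2, c3]
      (by rw [Fin.sum_univ_three]; simpa using h0)
      (by rw [Fin.sum_univ_three]; simpa using hc)
    exact ⟨by simpa using h 0 (Finset.mem_univ _), by simpa using h 1 (Finset.mem_univ _),
      by simpa using h 2 (Finset.mem_univ _)⟩
  set u : V2 := A - z with hu_def
  set v : V2 := B - z with hv_def
  set w : V2 := C - z with hw_def
  clear_value u v w
  have keyuv : ∀ a c : ℝ, a • u + c • v = 0 → a = 0 ∧ c = 0 := by
    intro a c h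
    rw [hu_def, hv_def, ← hcomb] at h
    have hv2 : (a - (a + c) * α) • A + (c - (a + c) * β) • B + (-((a + c) * γ)) • C = 0 := by
      rw [show (a - (a + c) * α) • A + (c - (a + c) * β) • B + (-((a + c) * γ)) • C
        = a • (A - (α • A + β • B + γ • C)) + c • (B - (α • A + β • B + γ • C)) from by module, h]
    obtain ⟨h1, h2, h3⟩ := key _ _ _ (by linear_combination (-(a + c)) * hsum) hv2
    have hac : a + c = 0 := by
      have := neg_eq_zero.1 h3
      rcases mul_eq_zero.1 this with h' | h'
      · exact h'
      · exact absurd h' (ne_of_gt hγ)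
    rw [hac, zero_mul, sub_zero] at h1 h2
    exact ⟨h1, h2⟩
  have hlin : α • u + β • v + γ • w = 0 := by
    have h' : α • u + β • v + γ • w = (α • A + β • B + γ • C) - (α + β + γ) • z := by
      rw [hu_def, hv_def, hw_def]; module
    rw [hcomb, hsum, one_smul, sub_self] at h'
    exact h'
  have hrel0 : α * u 0 + β * v 0 + γ * w 0 = 0 := by
    have := congrArg (fun f : V2 => f 0) hlin
    simpa using this
  have hrel1 : α * u 1 + β * v 1 + γ * w 1 = 0 := by
    have := congrArg (fun f : V2 => f 1) hlin
    simpa using this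
  have hw0 : w 0 = (-(α * u 0) - β * v 0) / γ := by
    field_simp; linarith
  have hw1 : w 1 = (-(α * u 1) - β * v 1) / γ := by
    field_simp; linarith
  set D : ℝ := u 0 * v 1 - u 1 * v 0 with hD_def
  have hD : D ≠ 0 := by
    intro hD0
    rw [hD_def] at hD0
    have h1 := keyuv (v 1) (-(u 1)) (by
      refine PiLp.ext fun i => ?_
      fin_cases i <;>
        simp only [Fin.zero_eta, Fin.mk_one, PiLp.add_apply, PiLp.smul_apply,
          PiLp.zero_apply, smul_eq_mul]
      · linear_combination hD0
      · ring)
    have h2 := keyuv (v 0) (-(u 0)) (by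
      refine PiLp.ext fun i => ?_
      fin_cases i <;>
        simp only [Fin.zero_eta, Fin.mk_one, PiLp.add_apply, PiLp.smul_apply,
          PiLp.zero_apply, smul_eq_mul]
      · ring
      · linear_combination -hD0)
    have h3 := keyuv 1 0 (by
      have hu0 : u = 0 := by
        refine PiLp.ext fun i => ?_
        fin_cases i <;> simp only [Fin.zero_eta, Fin.mk_one, PiLp.zero_apply] <;>
          [exact neg_eq_zero.1 h2.2; exact neg_eq_zero.1 h1.2]
      rw [hu0]; simp)
    exact one_ne_zero h3.1
  -- the polar triangle vertices
  set p : ℝ := -((β + γ) / α) with hp_def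
  set q : ℝ := -((γ + α) / β) with hq_def
  set P1 : V2 := (WithLp.equiv 2 (Fin 2 → ℝ)).symm ![(p * v 1 - u 1) / D, (u 0 - p * v 0) / D]
    with hP1_def
  set P2 : V2 := (WithLp.equiv 2 (Fin 2 → ℝ)).symm ![(v 1 - q * u 1) / D, (q * u 0 - v 0) / D]
    with hP2_def
  set P3 : V2 := (WithLp.equiv 2 (Fin 2 → ℝ)).symm ![(v 1 - u 1) / D, (u 0 - v 0) / D]
    with hP3_def
  clear_value p q P1 P2 P3
  have hP1c0 : P1 0 = (p * v 1 - u 1) / D := by rw [hP1_def]; rfl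
  have hP1c1 : P1 1 = (u 0 - p * v 0) / D := by rw [hP1_def]; rfl
  have hP2c0 : P2 0 = (v 1 - q * u 1) / D := by rw [hP2_def]; rfl
  have hP2c1 : P2 1 = (q * u 0 - v 0) / D := by rw [hP2_def]; rfl
  have hP3c0 : P3 0 = (v 1 - u 1) / D := by rw [hP3_def]; rfl
  have hP3c1 : P3 1 = (u 0 - v 0) / D := by rw [hP3_def]; rfl
  have hγ' : (1 : ℝ) - α - β ≠ 0 := by intro h; apply absurd hsum; intro h2; nlinarith
  have hγelim : γ = 1 - α - β := by linarith
  have hp_neg : p < 0 := by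
    rw [hp_def]
    have : 0 < (β + γ) / α := div_pos (by linarith) hα
    linarith
  have hq_neg : q < 0 := by
    rw [hq_def]
    have : 0 < (γ + α) / β := div_pos (by linarith) hβ
    linarith
  -- inner product table
  have huP1 : ⟪u, P1⟫ = p := by
    rw [aux_inner2, hP1c0, hP1c1, hD_def]
    have hD' : u 0 * v 1 - u 1 * v 0 ≠ 0 := by rw [← hD_def]; exact hD
    field_simp
    ring
  have hvP1 : ⟪v, P1⟫ = 1 := by
    rw [aux_inner2, hP1c0, hP1c1]
    have hD' : u 0 * v 1 - u 1 * v 0 ≠ 0 := by rw [← hD_def]; exact hD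
    field_simp
    rw [hD_def]; ring
  have hwP1 : ⟪w, P1⟫ = 1 := by
    rw [aux_inner2, hP1c0, hP1c1, hw0, hw1, hp_def, hγelim]
    have hD' : u 0 * v 1 - u 1 * v 0 ≠ 0 := by rw [← hD_def]; exact hD
    field_simp
    rw [hD_def]; ring
  have huP2 : ⟪u, P2⟫ = 1 := by
    rw [aux_inner2, hP2c0, hP2c1, hD_def]
    have hD' : u 0 * v 1 - u 1 * v 0 ≠ 0 := by rw [← hD_def]; exact hD
    field_simp
    ring
  have hvP2 : ⟪v, P2⟫ = q := by
    rw [aux_inner2, hP2c0, hP2c1]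
    have hD' : u 0 * v 1 - u 1 * v 0 ≠ 0 := by rw [← hD_def]; exact hD
    field_simp
    rw [hD_def]; ring
  have hwP2 : ⟪w, P2⟫ = 1 := by
    rw [aux_inner2, hP2c0, hP2c1, hw0, hw1, hq_def, hγelim]
    have hD' : u 0 * v 1 - u 1 * v 0 ≠ 0 := by rw [← hD_def]; exact hD
    field_simp
    rw [hD_def]; ring
  have huP3 : ⟪u, P3⟫ = 1 := by
    rw [aux_inner2, hP3c0, hP3c1, hD_def]
    have hD' : u 0 * v 1 - u 1 * v 0 ≠ 0 := by rw [← hD_def]; exact hD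
    field_simp
    ring
  have hvP3 : ⟪v, P3⟫ = 1 := by
    rw [aux_inner2, hP3c0, hP3c1]
    have hD' : u 0 * v 1 - u 1 * v 0 ≠ 0 := by rw [← hD_def]; exact hD
    field_simp
    rw [hD_def]; ring
  have hwP3 : ⟪w, P3⟫ = -((α + β) / γ) := by
    rw [aux_inner2, hP3c0, hP3c1, hw0, hw1]
    have hD' : u 0 * v 1 - u 1 * v 0 ≠ 0 := by rw [← hD_def]; exact hD
    field_simp
    rw [hD_def]; ring
  have hwP3_neg : ⟪w, P3⟫ < 0 := by
    rw [hwP3]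
    have : 0 < (α + β) / γ := div_pos (by linarith) hγ
    linarith
  -- description of the polar body
  have hT : polarBody (convexHull ℝ {A, B, C}) z
      = {y : V2 | ⟪u, y⟫ ≤ 1 ∧ ⟪v, y⟫ ≤ 1 ∧ ⟪w, y⟫ ≤ 1} := by
    ext y
    constructor
    · intro hy
      refine ⟨?_, ?_, ?_⟩
      · rw [hu_def]; exact hy A (subset_convexHull ℝ _ (by simp))
      · rw [hv_def]; exact hy B (subset_convexHull ℝ _ (by simp))
      · rw [hw_def]; exact hy C (subset_convexHull ℝ _ (by simp))
    · rintro ⟨h1, h2, h3⟩ x hx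
      have hlinmap : IsLinearMap ℝ (fun x : V2 => ⟪x, y⟫) :=
        ⟨fun a b => inner_add_left a b y, fun c x => real_inner_smul_left x y c⟩
      have hconv : Convex ℝ {x : V2 | ⟪x - z, y⟫ ≤ 1} := by
        have hset : {x : V2 | ⟪x - z, y⟫ ≤ 1} = {x : V2 | ⟪x, y⟫ ≤ 1 + ⟪z, y⟫} := by
          ext x'
          simp only [Set.mem_setOf_eq, inner_sub_left]
          constructor <;> intro <;> linarith
        rw [hset]
        exact convex_halfSpace_le hlinmap _
      have hsub : convexHull ℝ {A, B, C} ⊆ {x : V2 | ⟪x - z, y⟫ ≤ 1} := by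
        refine convexHull_min ?_ hconv
        intro x' hx'
        rcases hx' with rfl | rfl | rfl
        · rw [Set.mem_setOf_eq, ← hu_def]; exact h1
        · rw [Set.mem_setOf_eq, ← hv_def]; exact h2
        · rw [Set.mem_setOf_eq, ← hw_def]; exact h3
      exact hsub hx
  -- uniqueness of representation: two inner products determine the vector
  have equv : ∀ x : V2, ⟪u, x⟫ = 0 → ⟪v, x⟫ = 0 → x = 0 := by
    intro x h1 h2
    rw [aux_inner2] at h1 h2
    have hx0 : D * x 0 = 0 := by rw [hD_def]; linear_combination v 1 * h1 - u 1 * h2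
    have hx1 : D * x 1 = 0 := by rw [hD_def]; linear_combination (-(v 0)) * h1 + u 0 * h2
    refine PiLp.ext fun i => ?_
    fin_cases i <;> simp only [Fin.zero_eta, Fin.mk_one, PiLp.zero_apply]
    · exact (mul_eq_zero.1 hx0).resolve_left hD
    · exact (mul_eq_zero.1 hx1).resolve_left hD
  have hαp : α * p = -(β + γ) := by rw [hp_def]; field_simp
  have hβq : β * q = -(γ + α) := by rw [hq_def]; field_simp
  -- the sublevel set is the convex hull of P1 P2 P3
  have hHull : {y : V2 | ⟪u, y⟫ ≤ 1 ∧ ⟪v, y⟫ ≤ 1 ∧ ⟪w, y⟫ ≤ 1}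
      = convexHull ℝ {P1, P2, P3} := by
    apply Set.Subset.antisymm
    · rintro y ⟨h1, h2, h3⟩
      have hsum0 : α * ⟪u, y⟫ + β * ⟪v, y⟫ + γ * ⟪w, y⟫ = 0 := by
        rw [aux_inner2, aux_inner2, aux_inner2]
        linear_combination y 0 * hrel0 + y 1 * hrel1
      have hcomby : (α * (1 - ⟪u, y⟫)) • P1 + (β * (1 - ⟪v, y⟫)) • P2
          + (γ * (1 - ⟪w, y⟫)) • P3 = y := by
        have hdiff : ((α * (1 - ⟪u, y⟫)) • P1 + (β * (1 - ⟪v, y⟫)) • P2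
            + (γ * (1 - ⟪w, y⟫)) • P3) - y = 0 := by
          apply equv
          · simp only [inner_sub_right, inner_add_right, real_inner_smul_right,
              huP1, huP2, huP3, mul_one]
            linear_combination (1 - ⟪u, y⟫) * hαp - hsum0 + ⟪u, y⟫ * hsum
          · simp only [inner_sub_right, inner_add_right, real_inner_smul_right,
              hvP1, hvP2, hvP3, mul_one]
            linear_combination (1 - ⟪v, y⟫) * hβq - hsum0 + ⟪v, y⟫ * hsum
        have := sub_eq_zero.1 hdiff
        exact this
      have hl1 : 0 ≤ α * (1 - ⟪u, y⟫) := mul_nonneg hα.le (by linarith)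
      have hl2 : 0 ≤ β * (1 - ⟪v, y⟫) := mul_nonneg hβ.le (by linarith)
      have hl3 : 0 ≤ γ * (1 - ⟪w, y⟫) := mul_nonneg hγ.le (by linarith)
      have hlsum : α * (1 - ⟪u, y⟫) + β * (1 - ⟪v, y⟫) + γ * (1 - ⟪w, y⟫) = 1 := by
        linear_combination hsum - hsum0
      have hmem := Finset.centerMass_mem_convexHull (Finset.univ : Finset (Fin 3))
        (w := ![α * (1 - ⟪u, y⟫), β * (1 - ⟪v, y⟫), γ * (1 - ⟪w, y⟫)])
        (z := ![P1, P2, P3]) (s := ({P1, P2, P3} : Set V2))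
        (by intro i _; fin_cases i <;> [exact hl1; exact hl2; exact hl3])
        (by rw [Fin.sum_univ_three]; simp only [Matrix.cons_val_zero, Matrix.cons_val_one,
              Matrix.head_cons, Matrix.cons_val_two, Matrix.tail_cons]; rw [hlsum]; norm_num)
        (by intro i _; fin_cases i <;> simp)
      rw [Finset.centerMass_eq_of_sum_1] at hmem
      · rw [Fin.sum_univ_three] at hmem
        simp only [Matrix.cons_val_zero, Matrix.cons_val_one, Matrix.head_cons,
          Matrix.cons_val_two, Matrix.tail_cons] at hmem
        rwa [hcomby] at hmem
      · rw [Fin.sum_univ_three]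
        simp only [Matrix.cons_val_zero, Matrix.cons_val_one, Matrix.head_cons,
          Matrix.cons_val_two, Matrix.tail_cons]
        exact hlsum
    · refine convexHull_min ?_ ?_
      · intro x' hx'
        rcases hx' with rfl | rfl | rfl
        · exact ⟨le_of_lt (by linarith), le_of_eq hvP1, le_of_eq hwP1⟩
        · exact ⟨le_of_eq huP2, le_of_lt (by linarith), le_of_eq hwP2⟩
        · exact ⟨le_of_eq huP3, le_of_eq hvP3, le_of_lt (by linarith)⟩
      · have c1 : Convex ℝ {y : V2 | ⟪u, y⟫ ≤ 1} :=
          convex_halfSpace_le ⟨fun a b => inner_add_right u a b,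
            fun c x => real_inner_smul_right u x c⟩ _
        have c2 : Convex ℝ {y : V2 | ⟪v, y⟫ ≤ 1} :=
          convex_halfSpace_le ⟨fun a b => inner_add_right v a b,
            fun c x => real_inner_smul_right v x c⟩ _
        have c3 : Convex ℝ {y : V2 | ⟪w, y⟫ ≤ 1} :=
          convex_halfSpace_le ⟨fun a b => inner_add_right w a b,
            fun c x => real_inner_smul_right w x c⟩ _
        exact (c1.inter (c2.inter c3))
  -- affine independence of the polar vertices
  have hInd : AffineIndependent ℝ ![P1, P2, P3] := by
    rw [affineIndependent_iff_of_fintype]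
    intro wt hw
    rw [Finset.weightedVSub_eq_linear_combination _ hw, Fin.sum_univ_three] at *
    simp only [Matrix.cons_val_zero, Matrix.cons_val_one, Matrix.head_cons,
      Matrix.cons_val_two, Matrix.tail_cons] at *
    intro hvs
    have e1 : wt 0 * p + wt 1 + wt 2 = 0 := by
      have h := congrArg (fun x : V2 => ⟪u, x⟫) hvs
      simpa only [inner_add_right, real_inner_smul_right, huP1, huP2, huP3, mul_one,
        inner_zero_right] using h
    have e2 : wt 0 + wt 1 * q + wt 2 = 0 := by
      have h := congrArg (fun x : V2 => ⟪v, x⟫) hvs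
      simpa only [inner_add_right, real_inner_smul_right, hvP1, hvP2, hvP3, mul_one,
        inner_zero_right] using h
    have h0 : wt 0 = 0 := by
      have hz0 : wt 0 * (p - 1) = 0 := by linear_combination e1 - hw
      rcases mul_eq_zero.1 hz0 with h | h
      · exact h
      · exact absurd h (by intro hc; nlinarith)
    have h1 : wt 1 = 0 := by
      have hz1 : wt 1 * (q - 1) = 0 := by linear_combination e2 - hw
      rcases mul_eq_zero.1 hz1 with h | h
      · exact h
      · exact absurd h (by intro hc; nlinarith)
    have h2 : wt 2 = 0 := by linear_combination hw - h0 - h1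
    intro i
    fin_cases i
    · exact h0
    · exact h1
    · exact h2
  -- the three angle equivalences for the polar triangle
  have hD2 : (0:ℝ) < D * D := mul_self_pos.2 hD
  have hiff3 : EuclideanGeometry.angle P1 P3 P2 < Real.pi / 2 ↔ ⟪u, v⟫ < 0 := by
    have e3 : ⟪P1 - P3, P2 - P3⟫ = ((p - 1) * (q - 1) / (D * D)) * (-⟪u, v⟫) := by
      rw [aux_inner2 (P1 - P3), aux_inner2 u v]
      simp only [aux_sub_apply, hP1c0, hP1c1, hP2c0, hP2c1, hP3c0, hP3c1]
      field_simp
      ring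
    have k3 : 0 < (p - 1) * (q - 1) / (D * D) :=
      div_pos (mul_pos_of_neg_of_neg (by linarith) (by linarith)) hD2
    rw [aux_angle_eq, aux_angle_lt_pi_div_two_iff, e3, mul_pos_iff_of_pos_left k3, neg_pos]
  have hiff1 : EuclideanGeometry.angle P2 P1 P3 < Real.pi / 2 ↔ ⟪v, w⟫ < 0 := by
    have e1 : ⟪P2 - P1, P3 - P1⟫ = (γ / (α * α * β * (D * D))) * (-⟪v, w⟫) := by
      rw [aux_inner2 (P2 - P1), aux_inner2 v w]
      simp only [aux_sub_apply, hP1c0, hP1c1, hP2c0, hP2c1, hP3c0, hP3c1, hw0, hw1,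
        hp_def, hq_def]
      rw [hγelim]
      field_simp
      ring
    have k1 : 0 < γ / (α * α * β * (D * D)) := div_pos hγ (by positivity)
    rw [aux_angle_eq, aux_angle_lt_pi_div_two_iff, e1, mul_pos_iff_of_pos_left k1, neg_pos]
  have hiff2 : EuclideanGeometry.angle P1 P2 P3 < Real.pi / 2 ↔ ⟪w, u⟫ < 0 := by
    have e2 : ⟪P1 - P2, P3 - P2⟫ = (γ / (α * β * β * (D * D))) * (-⟪w, u⟫) := by
      rw [aux_inner2 (P1 - P2), aux_inner2 w u]
      simp only [aux_sub_apply, hP1c0, hP1c1, hP2c0, hP2c1, hP3c0, hP3c1, hw0, hw1,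
        hp_def, hq_def]
      rw [hγelim]
      field_simp
      ring
    have k2 : 0 < γ / (α * β * β * (D * D)) := div_pos hγ (by positivity)
    rw [aux_angle_eq, aux_angle_lt_pi_div_two_iff, e2, mul_pos_iff_of_pos_left k2, neg_pos]
  -- main characterization in terms of inner products
  have hmain : IsAcuteTriangle (polarBody (convexHull ℝ {A, B, C}) z) ↔
      (⟪u, v⟫ < 0 ∧ ⟪v, w⟫ < 0 ∧ ⟪w, u⟫ < 0) := by
    constructor
    · rintro ⟨X, Y, Z, hXYZ, hS, a1, a2, a3⟩
      have hullEq : convexHull ℝ {X, Y, Z} = convexHull ℝ ({P1, P2, P3} : Set V2) := by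
        rw [← hS, hT, hHull]
      obtain ⟨hX, hY, hZ⟩ := aux_vertex_mem hXYZ hullEq
      have hXY : X ≠ Y := by
        have := hXYZ.injective.ne (show (0 : Fin 3) ≠ 1 by decide)
        simpa using this
      have hXZ : X ≠ Z := by
        have := hXYZ.injective.ne (show (0 : Fin 3) ≠ 2 by decide)
        simpa using this
      have hYZ : Y ≠ Z := by
        have := hXYZ.injective.ne (show (1 : Fin 3) ≠ 2 by decide)
        simpa using this
      have hAcuXYZ : Acu3 X Y Z := ⟨a1, a2, a3⟩
      simp only [Set.mem_insert_iff, Set.mem_singleton_iff] at hX hY hZ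
      have hAcuP : Acu3 P1 P2 P3 := by
        rcases hX with rfl | rfl | rfl <;> rcases hY with rfl | rfl | rfl <;>
          rcases hZ with rfl | rfl | rfl <;>
          first
            | exact absurd rfl hXY
            | exact absurd rfl hXZ
            | exact absurd rfl hYZ
            | exact hAcuXYZ
            | exact hAcuXYZ.s12
            | exact hAcuXYZ.s23
            | exact hAcuXYZ.s23.s12
            | exact hAcuXYZ.s12.s23
            | exact hAcuXYZ.s23.s12.s23
      obtain ⟨b1, b2, b3⟩ := hAcuP
      exact ⟨hiff3.1 b3, hiff1.1 b1, hiff2.1 b2⟩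
    · rintro ⟨h1, h2, h3⟩
      exact ⟨P1, P2, P3, hInd, by rw [hT, hHull], hiff1.2 h2, hiff2.2 h3, hiff3.2 h1⟩
  have g1 : (Real.pi / 2 < EuclideanGeometry.angle A z B) ↔ ⟪u, v⟫ < 0 := by
    rw [aux_angle_eq, aux_pi_div_two_lt_angle_iff, ← hu_def, ← hv_def]
  have g2 : (Real.pi / 2 < EuclideanGeometry.angle B z C) ↔ ⟪v, w⟫ < 0 := by
    rw [aux_angle_eq, aux_pi_div_two_lt_angle_iff, ← hv_def, ← hw_def]
  have g3 : (Real.pi / 2 < EuclideanGeometry.angle C z A) ↔ ⟪w, u⟫ < 0 := by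
    rw [aux_angle_eq, aux_pi_div_two_lt_angle_iff, ← hw_def, ← hu_def]
  have m1 : (z ∈ Metric.ball (midpoint ℝ A B) (dist A B / 2)) ↔ ⟪u, v⟫ < 0 := by
    rw [aux_ball_iff, ← hu_def, ← hv_def]
  have m2 : (z ∈ Metric.ball (midpoint ℝ B C) (dist B C / 2)) ↔ ⟪v, w⟫ < 0 := by
    rw [aux_ball_iff, ← hv_def, ← hw_def]
  have m3 : (z ∈ Metric.ball (midpoint ℝ C A) (dist C A / 2)) ↔ ⟪w, u⟫ < 0 := by
    rw [aux_ball_iff, ← hw_def, ← hu_def]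
  constructor
  · rw [hmain]
    exact Iff.symm (and_congr g1 (and_congr g2 g3))
  · rw [hmain]
    exact Iff.symm (and_congr m1 (and_congr m2 m3))
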